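/- Let X and Y be Polish, c : X × Y → [0,∞) continuous, μ ∈ P(X), ν ∈ P(Y) with T_c(μ,ν) < ∞, and let π ∈ C(μ,ν) be an optimal plan. Let X̃ ⊂ X and Ỹ ⊂ Y be Borel and Polish subspaces with μ(X̃) = ν(Ỹ) = 1, let c̃ be the restriction of c to X̃ × Ỹ, and let Γ̃ = supp π ∩ (X̃ × Ỹ). Then every Kantorovich potential f̃ ∈ S_c̃(μ,ν) of the restricted problem admits a Kantorovich potential f ∈ S_c(μ,ν) of the original problem such that f agrees with f̃ on pr_X(Γ̃) and the conjugates f^c and f̃^c̃ agree on pr_Y(Γ̃). -/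

import Mathlib

open MeasureTheory Filter Set Topology
open scoped ENNReal NNReal Manifold

noncomputable section

/-- The topological support of a Borel measure: points all of whose open
neighborhoods have positive measure. -/
def msupport {X : Type*} [TopologicalSpace X] [MeasurableSpace X]
    (μ : Measure X) : Set X :=
  {x | ∀ U : Set X, IsOpen U → x ∈ U → 0 < μ U}

/-- `π` is a coupling (transport plan) between `μ` and `ν`. -/
def IsCoupling {X Y : Type*} [MeasurableSpace X] [MeasurableSpace Y]
    (π : Measure (X × Y)) (μ : Measure X) (ν : Measure Y) : Prop :=
  π.map Prod.fst = μ ∧ π.map Prod.snd = ν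

/-- The optimal transport cost `T_c(μ, ν)`. -/
def transportCost {X Y : Type*} [MeasurableSpace X] [MeasurableSpace Y]
    (c : X → Y → ℝ) (μ : Measure X) (ν : Measure Y) : ℝ≥0∞ :=
  ⨅ (π : Measure (X × Y)) (_ : IsCoupling π μ ν),
    ∫⁻ p, ENNReal.ofReal (c p.1 p.2) ∂π

/-- `π` is an optimal transport plan between `μ` and `ν` for the cost `c`. -/
def IsOptimalPlan {X Y : Type*} [MeasurableSpace X] [MeasurableSpace Y]
    (c : X → Y → ℝ) (μ : Measure X) (ν : Measure Y) (π : Measure (X × Y)) : Prop :=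
  IsCoupling π μ ν ∧
    ∫⁻ p, ENNReal.ofReal (c p.1 p.2) ∂π = transportCost c μ ν

/-- The `c`-transform of a function `f : X → ℝ ∪ {-∞}`, namely
`f^c(y) = inf_x (c(x,y) - f(x))`. -/
def cTransform {X Y : Type*} (c : X → Y → ℝ) (f : X → EReal) : Y → EReal :=
  fun y => ⨅ x, ((c x y : ℝ) : EReal) - f x

/-- The `c`-transform of a function `g : Y → ℝ ∪ {-∞}`, namely
`g^c(x) = inf_y (c(x,y) - g(y))`. -/
def cTransformY {X Y : Type*} (c : X → Y → ℝ) (g : Y → EReal) : X → EReal :=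
  fun x => ⨅ y, ((c x y : ℝ) : EReal) - g y

/-- `f : X → ℝ ∪ {-∞}` is `c`-concave on `X`: it is the `c`-transform of some
`g : Y → ℝ ∪ {-∞}` and is not identically `-∞`. -/
def CConcave {X Y : Type*} (c : X → Y → ℝ) (f : X → EReal) : Prop :=
  (∃ g : Y → EReal, (∀ y, g y ≠ ⊤) ∧ f = cTransformY c g) ∧
    (∀ x, f x ≠ ⊤) ∧ (∃ x, f x ≠ ⊥)

/-- The `c`-subdifferential `∂_c f = {(x,y) | f(x) + f^c(y) = c(x,y)}`. -/
def cSubdiff {X Y : Type*} (c : X → Y → ℝ) (f : X → EReal) : Set (X × Y) :=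
  {p | f p.1 + cTransform c f p.2 = ((c p.1 p.2 : ℝ) : EReal)}

/-- `f` is a (generalized) Kantorovich potential for `(c, μ, ν)`: it is
`c`-concave and satisfies `f ⊕ f^c = c` almost surely with respect to every
optimal transport plan (which, for `T_c(μ,ν) < ∞`, is equivalent to
`∫ (f ⊕ f^c) dπ = T_c(μ,ν)` for every optimal `π`, since `f ⊕ f^c ≤ c`). -/
def IsKantorovichPotential {X Y : Type*} [MeasurableSpace X] [MeasurableSpace Y]
    (c : X → Y → ℝ) (μ : Measure X) (ν : Measure Y) (f : X → EReal) : Prop :=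
  CConcave c f ∧
    ∀ π : Measure (X × Y), IsOptimalPlan c μ ν π →
      ∀ᵐ p ∂π, f p.1 + cTransform c f p.2 = ((c p.1 p.2 : ℝ) : EReal)

/-- The plan `π` induces regularity on `U` with respect to the compact set `K`. -/
def InducesRegularityOn {X Y : Type*} [TopologicalSpace X] [TopologicalSpace Y]
    [MeasurableSpace X] [MeasurableSpace Y]
    (π : Measure (X × Y)) (U : Set X) (K : Set Y) : Prop :=
  IsCompact K ∧
    (Prod.fst '' msupport π) ∩ U = Prod.fst '' (msupport π ∩ (U ×ˢ K))

/-- The plan `π` induces regularity at the point `x ∈ supp μ`: it induces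
regularity on some relatively open neighborhood `U ⊆ supp μ` of `x`. -/
def InducesRegularityAt {X Y : Type*} [TopologicalSpace X] [TopologicalSpace Y]
    [MeasurableSpace X] [MeasurableSpace Y]
    (π : Measure (X × Y)) (μ : Measure X) (x : X) : Prop :=
  ∃ U : Set X, x ∈ U ∧ (∃ V : Set X, IsOpen V ∧ U = V ∩ msupport μ) ∧
    ∃ K : Set Y, InducesRegularityOn π U K

/-- `F` is a decomposition of the set `S` into its connected components. -/
def IsComponentDecomp {X : Type*} [TopologicalSpace X] {ι : Type*}
    (S : Set X) (F : ι → Set X) : Prop :=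
  (⋃ i, F i) = S ∧ Pairwise (fun i j => Disjoint (F i) (F j)) ∧
    ∀ i, ∃ x ∈ S, F i = connectedComponentIn S x

/-- A transport plan `π` is degenerate (with respect to decompositions `F`, `G`
of the supports of `μ` and `ν` into connected components). -/
def IsDegenerate {X Y : Type*} [MeasurableSpace X] [MeasurableSpace Y] {ι κ : Type*}
    (F : ι → Set X) (G : κ → Set Y) (μ : Measure X) (ν : Measure Y)
    (π : Measure (X × Y)) : Prop :=
  ∃ (I' : Set ι) (J' : Set κ),
    0 < (∑' i : I', μ (F i.1)) ∧
    (∑' i : I', μ (F i.1)) = (∑' i : I', ∑' j : J', π (F i.1 ×ˢ G j.1)) ∧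
    (∑' i : I', ∑' j : J', π (F i.1 ×ˢ G j.1)) = (∑' j : J', ν (G j.1)) ∧
    (∑' j : J', ν (G j.1)) < 1

end

section AuxLemmas

open MeasureTheory Filter Set Topology
open scoped ENNReal

lemma ereal_sub_sub_cancel (r : ℝ) (s : EReal) : (r:EReal) - ((r:EReal) - s) = s := by
  induction s using EReal.rec with
  | bot => simp
  | top => simp
  | coe s => rw [← EReal.coe_sub, ← EReal.coe_sub]; norm_num

lemma ereal_le_sub_comm {r : ℝ} {a b : EReal} (h : a ≤ (r:EReal) - b) :
    b ≤ (r:EReal) - a := by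
  have := EReal.sub_le_sub (le_refl ((r:EReal))) h
  rwa [ereal_sub_sub_cancel] at this

lemma ereal_sub_ne_top {r : ℝ} {a : EReal} (hb : a ≠ ⊥) : (r:EReal) - a ≠ ⊤ := by
  induction a using EReal.rec with
  | bot => exact absurd rfl hb
  | top => simp
  | coe a => rw [← EReal.coe_sub]; exact EReal.coe_ne_top _

lemma ereal_coe_sub_bot (r : ℝ) : (r:EReal) - (⊥ : EReal) = ⊤ :=
  EReal.coe_sub_bot r

section Transforms
variable {X Y : Type*} (c : X → Y → ℝ)

lemma le_cT_cTY (g : Y → EReal) (y : Y) :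
    g y ≤ cTransform c (cTransformY c g) y :=
  le_iInf fun x => ereal_le_sub_comm
    (iInf_le (fun y' => ((c x y' : ℝ) : EReal) - g y') y)

lemma le_cTY_cT (f : X → EReal) (x : X) :
    f x ≤ cTransformY c (cTransform c f) x :=
  le_iInf fun y => ereal_le_sub_comm
    (iInf_le (fun x' => ((c x' y : ℝ) : EReal) - f x') x)

lemma cTY_anti {g g' : Y → EReal} (h : ∀ y, g y ≤ g' y) (x : X) :
    cTransformY c g' x ≤ cTransformY c g x :=
  iInf_mono fun y => EReal.sub_le_sub le_rfl (h y)

lemma cTY_cT_cTY (g : Y → EReal) (x : X) :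
    cTransformY c (cTransform c (cTransformY c g)) x = cTransformY c g x :=
  le_antisymm (cTY_anti c (le_cT_cTY c g) x) (le_cTY_cT c (cTransformY c g) x)

end Transforms

end AuxLemmas

/-- Extension of Kantorovich potentials from Borel Polish
subspaces of full mass to the whole space. -/
theorem stmt3 {X Y : Type*}
    [TopologicalSpace X] [PolishSpace X] [MeasurableSpace X] [BorelSpace X]
    [TopologicalSpace Y] [PolishSpace Y] [MeasurableSpace Y] [BorelSpace Y]
    (c : X → Y → ℝ) (hc0 : ∀ x y, 0 ≤ c x y)
    (hccont : Continuous fun p : X × Y => c p.1 p.2)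
    (μ : Measure X) (ν : Measure Y) [IsProbabilityMeasure μ] [IsProbabilityMeasure ν]
    (hT : transportCost c μ ν < ⊤)
    (π : Measure (X × Y)) (hπ : IsOptimalPlan c μ ν π)
    (Xt : Set X) (Yt : Set Y) (hXtm : MeasurableSet Xt) (hYtm : MeasurableSet Yt)
    (hXtP : PolishSpace ↥Xt) (hYtP : PolishSpace ↥Yt)
    (hXt1 : μ Xt = 1) (hYt1 : ν Yt = 1)
    (ft : ↥Xt → EReal)
    (hft : IsKantorovichPotential (fun (x : ↥Xt) (y : ↥Yt) => c x.1 y.1)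
      (Measure.comap Subtype.val μ) (Measure.comap Subtype.val ν) ft) :
    ∃ f : X → EReal,
      IsKantorovichPotential c μ ν f ∧
      (∀ p : X × Y, p ∈ msupport π ∩ (Xt ×ˢ Yt) →
        ∀ hx : p.1 ∈ Xt, f p.1 = ft ⟨p.1, hx⟩) ∧
      (∀ p : X × Y, p ∈ msupport π ∩ (Xt ×ˢ Yt) →
        ∀ hy : p.2 ∈ Yt,
          cTransform c f p.2 =
            cTransform (fun (x : ↥Xt) (y : ↥Yt) => c x.1 y.1) ft ⟨p.2, hy⟩) := by
  classical
  set ct : ↥Xt → ↥Yt → ℝ := fun x y => c x.1 y.1 with hct_def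
  obtain ⟨⟨g0, hg0top, hft_eq⟩, hft_ne_top, x0, hx0⟩ := hft.1
  have hdouble : ∀ x : ↥Xt, cTransformY ct (cTransform ct ft) x = ft x := by
    intro x; rw [hft_eq]; exact cTY_cT_cTY ct g0 x
  set gt : ↥Yt → EReal := cTransform ct ft with hgt_def
  -- `gt` is never `⊤`
  have hgt_ne_top : ∀ y, gt y ≠ ⊤ := by
    intro y htop
    have h1 : gt y ≤ ((ct x0 y : ℝ):EReal) - ft x0 :=
      iInf_le (fun x => ((ct x y : ℝ):EReal) - ft x) x0
    rw [htop] at h1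
    exact ereal_sub_ne_top (r := ct x0 y) hx0 (top_le_iff.1 h1)
  -- `gt` is somewhere not `⊥`
  have hYtne : Nonempty ↥Yt := by
    rcases Set.eq_empty_or_nonempty Yt with h | h
    · rw [h] at hYt1; simp at hYt1
    · exact Set.Nonempty.to_subtype h
  have hgt_ne_bot : ∃ y0, gt y0 ≠ ⊥ := by
    by_contra h
    push_neg at h
    have hd := hdouble x0
    have h2 : cTransformY ct (cTransform ct ft) x0 = ⊤ := by
      rw [show cTransformY ct (cTransform ct ft) x0
            = ⨅ y, ((ct x0 y : ℝ):EReal) - gt y from rfl]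
      rw [iInf_eq_top]
      intro y
      rw [h y]
      exact ereal_coe_sub_bot _
    rw [h2] at hd
    exact hft_ne_top x0 hd.symm
  obtain ⟨y0, hy0⟩ := hgt_ne_bot
  -- the extended potential
  set g : Y → EReal := fun y => if hy : y ∈ Yt then gt ⟨y, hy⟩ else ⊥ with hg_def
  set f : X → EReal := cTransformY c g with hf_def
  -- `f` restricted to `Xt` is `ft`
  have hrestrict : ∀ x (hx : x ∈ Xt), f x = ft ⟨x, hx⟩ := by
    intro x hx
    have hsplit : f x = ⨅ y : ↥Yt, (((c x y.1 : ℝ):EReal) - gt y) := by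
      apply le_antisymm
      · refine le_iInf fun y => ?_
        have h1 := iInf_le (fun y' : Y => ((c x y' : ℝ):EReal) - g y') (y.1 : Y)
        have h2 : g (y.1 : Y) = gt y := by
          rw [hg_def]; simp only [y.2, dif_pos]
        rw [h2] at h1
        exact h1
      · refine le_iInf fun y => ?_
        by_cases hy : y ∈ Yt
        · have h1 := iInf_le (fun y' : ↥Yt => ((c x y'.1 : ℝ):EReal) - gt y') ⟨y, hy⟩
          have h2 : g y = gt ⟨y, hy⟩ := by rw [hg_def]; simp only [hy, dif_pos]
          rw [h2]
          exact h1
        · have h2 : g y = ⊥ := by rw [hg_def]; simp only [hy, dif_neg, not_false_iff]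
          rw [h2, ereal_coe_sub_bot]
          exact le_top
    rw [hsplit]
    exact hdouble ⟨x, hx⟩
  -- the conjugate of `f` restricted to `Yt` is `gt`
  have hrestrictc : ∀ y (hy : y ∈ Yt), cTransform c f y = gt ⟨y, hy⟩ := by
    intro y hy
    apply le_antisymm
    · refine le_iInf fun x => ?_
      have h1 := iInf_le (fun x' : X => ((c x' y : ℝ):EReal) - f x') (x.1 : X)
      rw [hrestrict x.1 x.2] at h1
      exact h1
    · have h2 : g y ≤ cTransform c f y := by
        rw [hf_def]; exact le_cT_cTY c g y
      have h3 : g y = gt ⟨y, hy⟩ := by rw [hg_def]; simp only [hy, dif_pos]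
      rw [h3] at h2
      exact h2
  -- `f` is c-concave
  have hg_ne_top : ∀ y, g y ≠ ⊤ := by
    intro y
    rw [hg_def]
    by_cases hy : y ∈ Yt
    · simp only [hy, dif_pos]; exact hgt_ne_top _
    · simp only [hy, dif_neg, not_false_iff]; exact bot_ne_top
  have hf_ne_top : ∀ x, f x ≠ ⊤ := by
    intro x htop
    have h1 : f x ≤ ((c x y0.1 : ℝ):EReal) - g y0.1 :=
      iInf_le (fun y' : Y => ((c x y' : ℝ):EReal) - g y') (y0.1 : Y)
    have h2 : g (y0.1 : Y) = gt y0 := by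
      rw [hg_def]; simp only [y0.2, dif_pos]
    rw [h2, htop] at h1
    exact ereal_sub_ne_top (r := c x y0.1) hy0 (top_le_iff.1 h1)
  have hf_ne_bot : ∃ x, f x ≠ ⊥ := by
    refine ⟨x0.1, ?_⟩
    rw [hrestrict x0.1 x0.2]
    simpa using hx0
  -- measurable embeddings
  have hvX : MeasurableEmbedding ((↑) : ↥Xt → X) := MeasurableEmbedding.subtype_coe hXtm
  have hvY : MeasurableEmbedding ((↑) : ↥Yt → Y) := MeasurableEmbedding.subtype_coe hYtm
  set e : ↥Xt × ↥Yt → X × Y := fun q => (q.1.1, q.2.1) with he_def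
  have he : MeasurableEmbedding e := hvX.prodMap hvY
  have hrange : Set.range e = Xt ×ˢ Yt := by
    have h1 : e = Prod.map (Subtype.val) (Subtype.val) := rfl
    rw [h1, Set.range_prodMap, Subtype.range_coe, Subtype.range_coe]
  have hφm : Measurable (fun p : X × Y => ENNReal.ofReal (c p.1 p.2)) :=
    ENNReal.measurable_ofReal.comp hccont.measurable
  have hμXtc : μ Xtᶜ = 0 := (prob_compl_eq_zero_iff hXtm).2 hXt1
  have hνYtc : ν Ytᶜ = 0 := (prob_compl_eq_zero_iff hYtm).2 hYt1
  -- any coupling gives full mass to `Xt ×ˢ Yt`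
  have hfull : ∀ π'' : Measure (X × Y), IsCoupling π'' μ ν → π'' ((Xt ×ˢ Yt)ᶜ) = 0 := by
    rintro π'' ⟨h1, h2⟩
    have hXside : π'' (Prod.fst ⁻¹' Xtᶜ) = 0 := by
      rw [← Measure.map_apply measurable_fst hXtm.compl, h1]; exact hμXtc
    have hYside : π'' (Prod.snd ⁻¹' Ytᶜ) = 0 := by
      rw [← Measure.map_apply measurable_snd hYtm.compl, h2]; exact hνYtc
    refine measure_mono_null ?_ (measure_union_null hXside hYside)
    intro p hp
    simp only [Set.mem_compl_iff, Set.mem_prod, not_and_or] at hp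
    simpa using hp
  have hres : ∀ π'' : Measure (X × Y), IsCoupling π'' μ ν →
      π''.restrict (Xt ×ˢ Yt) = π'' := by
    intro π'' h
    refine Measure.restrict_eq_self_of_ae_mem (ae_iff.2 ?_)
    exact hfull π'' h
  have hmapcomap : ∀ π'' : Measure (X × Y), IsCoupling π'' μ ν →
      (π''.comap e).map e = π'' := by
    intro π'' h
    rw [he.map_comap, hrange, hres π'' h]
  -- image computations
  have himgA : ∀ A : Set ↥Xt,
      e '' (Prod.fst ⁻¹' A) = (((↑) : ↥Xt → X) '' A) ×ˢ Yt := by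
    intro A
    ext ⟨x, y⟩
    constructor
    · rintro ⟨⟨a, b⟩, ha, heq⟩
      rw [← heq]
      exact ⟨⟨a, ha, rfl⟩, b.2⟩
    · rintro ⟨⟨a, ha, rfl⟩, hy⟩
      exact ⟨(a, ⟨y, hy⟩), ha, rfl⟩
  have himgB : ∀ B : Set ↥Yt,
      e '' (Prod.snd ⁻¹' B) = Xt ×ˢ (((↑) : ↥Yt → Y) '' B) := by
    intro B
    ext ⟨x, y⟩
    constructor
    · rintro ⟨⟨a, b⟩, hb, heq⟩
      rw [← heq]
      exact ⟨a.2, ⟨b, hb, rfl⟩⟩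
    · rintro ⟨hx, ⟨b, hb, rfl⟩⟩
      exact ⟨(⟨x, hx⟩, b), hb, rfl⟩
  -- marginals of the comap plan
  have hcomap_fst : ∀ π'' : Measure (X × Y), IsCoupling π'' μ ν →
      (π''.comap e).map Prod.fst = Measure.comap Subtype.val μ := by
    intro π'' hco
    ext A hA
    rw [Measure.map_apply measurable_fst hA, he.comap_apply, himgA,
        hvX.comap_apply]
    have hsub : ((((↑) : ↥Xt → X) '' A) ×ˢ Yt : Set (X × Y))
        = (Prod.fst ⁻¹' (((↑) : ↥Xt → X) '' A)) ∩ (Prod.snd ⁻¹' Yt) := by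
      ext p; simp [Set.mem_prod]
    rw [hsub, measure_inter_conull (by
      rw [show (Prod.snd ⁻¹' Yt : Set (X × Y))ᶜ = Prod.snd ⁻¹' Ytᶜ from rfl,
          ← Measure.map_apply measurable_snd hYtm.compl, hco.2]
      exact hνYtc)]
    rw [← Measure.map_apply measurable_fst (hvX.measurableSet_image' hA), hco.1]
  have hcomap_snd : ∀ π'' : Measure (X × Y), IsCoupling π'' μ ν →
      (π''.comap e).map Prod.snd = Measure.comap Subtype.val ν := by
    intro π'' hco
    ext B hB
    rw [Measure.map_apply measurable_snd hB, he.comap_apply, himgB,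
        hvY.comap_apply]
    have hsub : ((Xt ×ˢ (((↑) : ↥Yt → Y) '' B)) : Set (X × Y))
        = (Prod.snd ⁻¹' (((↑) : ↥Yt → Y) '' B)) ∩ (Prod.fst ⁻¹' Xt) := by
      ext p; simp [Set.mem_prod, and_comm]
    rw [hsub, measure_inter_conull (by
      rw [show (Prod.fst ⁻¹' Xt : Set (X × Y))ᶜ = Prod.fst ⁻¹' Xtᶜ from rfl,
          ← Measure.map_apply measurable_fst hXtm.compl, hco.1]
      exact hμXtc)]
    rw [← Measure.map_apply measurable_snd (hvY.measurableSet_image' hB), hco.2]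
  -- cost of the comap plan
  have hcost_comap : ∀ π'' : Measure (X × Y), IsCoupling π'' μ ν →
      ∫⁻ q, ENNReal.ofReal (ct q.1 q.2) ∂(π''.comap e)
        = ∫⁻ p, ENNReal.ofReal (c p.1 p.2) ∂π'' := by
    intro π'' hco
    conv_rhs => rw [← hmapcomap π'' hco]
    rw [he.lintegral_map]
  -- pushing couplings forward
  have hmap_coupling : ∀ σ : Measure (↥Xt × ↥Yt),
      IsCoupling σ (Measure.comap Subtype.val μ) (Measure.comap Subtype.val ν) →
      IsCoupling (σ.map e) μ ν := by
    intro σ hσ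
    constructor
    · rw [Measure.map_map measurable_fst he.measurable]
      have h1 : (Prod.fst ∘ e : ↥Xt × ↥Yt → X) = (Subtype.val) ∘ Prod.fst := rfl
      rw [h1, ← Measure.map_map hvX.measurable measurable_fst, hσ.1,
          hvX.map_comap, Subtype.range_coe]
      exact Measure.restrict_eq_self_of_ae_mem (ae_iff.2 hμXtc)
    · rw [Measure.map_map measurable_snd he.measurable]
      have h1 : (Prod.snd ∘ e : ↥Xt × ↥Yt → Y) = (Subtype.val) ∘ Prod.snd := rfl
      rw [h1, ← Measure.map_map hvY.measurable measurable_snd, hσ.2,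
          hvY.map_comap, Subtype.range_coe]
      exact Measure.restrict_eq_self_of_ae_mem (ae_iff.2 hνYtc)
  -- the two transport costs agree
  have hTeq : transportCost ct (Measure.comap Subtype.val μ) (Measure.comap Subtype.val ν)
      = transportCost c μ ν := by
    apply le_antisymm
    · simp only [transportCost]
      rw [show (⨅ (π'' : Measure (X × Y)) (_ : IsCoupling π'' μ ν),
          ∫⁻ p, ENNReal.ofReal (c p.1 p.2) ∂π'') = transportCost c μ ν from rfl]
      refine le_iInf fun π'' => le_iInf fun hco => ?_
      rw [← hcost_comap π'' hco]
      exact iInf₂_le _ ⟨hcomap_fst π'' hco, hcomap_snd π'' hco⟩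
    · simp only [transportCost]
      refine le_iInf fun σ => le_iInf fun hσ => ?_
      have h1 : ∫⁻ q, ENNReal.ofReal (ct q.1 q.2) ∂σ
          = ∫⁻ p, ENNReal.ofReal (c p.1 p.2) ∂(σ.map e) :=
        (he.lintegral_map (f := fun p : X × Y => ENNReal.ofReal (c p.1 p.2))).symm
      rw [h1]
      exact iInf₂_le (σ.map e) (hmap_coupling σ hσ)
  -- assemble
  refine ⟨f, ⟨⟨⟨g, hg_ne_top, hf_def⟩, hf_ne_top, hf_ne_bot⟩, ?_⟩, ?_, ?_⟩
  · -- the a.e. condition for every optimal plan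
    intro π' hπ'
    have hσopt : IsOptimalPlan ct (Measure.comap Subtype.val μ)
        (Measure.comap Subtype.val ν) (π'.comap e) := by
      refine ⟨⟨hcomap_fst π' hπ'.1, hcomap_snd π' hπ'.1⟩, ?_⟩
      rw [hcost_comap π' hπ'.1, hπ'.2, hTeq]
    have hae := hft.2 (π'.comap e) hσopt
    have hrw : π' = (π'.comap e).map e := (hmapcomap π' hπ'.1).symm
    rw [hrw, he.ae_map_iff]
    filter_upwards [hae] with q hq
    have h1 : f (e q).1 = ft q.1 := by
      rw [show (e q).1 = (q.1.1 : X) from rfl, hrestrict q.1.1 q.1.2]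
    have h2 : cTransform c f (e q).2 = cTransform ct ft q.2 := by
      rw [show (e q).2 = (q.2.1 : Y) from rfl, hrestrictc q.2.1 q.2.2]
    rw [h1, h2]
    exact hq
  · intro p _ hx
    exact hrestrict p.1 hx
  · intro p _ hy
    exact hrestrictc p.2 hy
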